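/- The ratio A(n)/A(n-1) = (3n-2)!·(n-1)! / ((2n-1)!·(2n-2)!) is a nondecreasing function of n for n ≥ 1. -/

import Mathlib

open Finset Nat

/-- `A n = ∏_{k=0}^{n-1} (3k+1)!/(n+k)!`, the ASM numbers (as rationals), with `A 0 = 1`. -/
def A (n : ℕ) : ℚ := ∏ k ∈ Finset.range n, ((3 * k + 1)! : ℚ) / ((n + k)! : ℚ)

lemma A_pos (n : ℕ) : 0 < A n := by
  apply Finset.prod_pos
  intro k _
  positivity

lemma Q_eq (n : ℕ) : (∏ k ∈ Finset.range n, ((n + k)! : ℚ)) =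
    ∏ j ∈ Finset.Ico n (2 * n), (j ! : ℚ) := by
  rw [Finset.prod_Ico_eq_prod_range, show 2 * n - n = n by omega]

lemma A_succ (n : ℕ) :
    A (n + 1) * (((2*n+1)! : ℚ) * ((2*n)! : ℚ)) = A n * (((3*n+1)! : ℚ) * (n ! : ℚ)) := by
  have hQ : (∏ k ∈ Finset.range (n+1), ((n + 1 + k)! : ℚ)) * (n ! : ℚ)
      = (∏ k ∈ Finset.range n, ((n + k)! : ℚ)) * (((2*n+1)! : ℚ) * ((2*n)! : ℚ)) := by
    rcases Nat.eq_zero_or_pos n with h | h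
    · subst h; simp
    · rw [Q_eq, Q_eq]
      rw [show 2 * (n + 1) = (2*n+1) + 1 by ring,
        Finset.prod_Ico_succ_top (show n + 1 ≤ 2*n+1 by omega),
        show (2*n+1 : ℕ) = (2*n) + 1 from rfl,
        Finset.prod_Ico_succ_top (show n + 1 ≤ 2*n by omega)]
      rw [show (∏ j ∈ Finset.Ico n (2*n), (j ! : ℚ))
          = (n ! : ℚ) * ∏ j ∈ Finset.Ico (n+1) (2*n), (j ! : ℚ) from
          Finset.prod_eq_prod_Ico_succ_bot (by omega) _]
      ring
  have hP : (∏ k ∈ Finset.range (n+1), ((3 * k + 1)! : ℚ))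
      = (∏ k ∈ Finset.range n, ((3 * k + 1)! : ℚ)) * ((3*n+1)! : ℚ) := by
    rw [Finset.prod_range_succ]
  have hA : ∀ N : ℕ, A N = (∏ k ∈ Finset.range N, ((3 * k + 1)! : ℚ)) /
      (∏ k ∈ Finset.range N, ((N + k)! : ℚ)) := by
    intro N
    rw [A, Finset.prod_div_distrib]
  have hQpos : ∀ N : ℕ, (0:ℚ) < ∏ k ∈ Finset.range N, ((N + k)! : ℚ) := by
    intro N; apply Finset.prod_pos; intro k _; positivity
  rw [hA, hA, hP]
  have h1 := hQpos (n+1)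
  have h2 := hQpos n
  have hfn : (0:ℚ) < (n ! : ℚ) := by positivity
  field_simp
  linear_combination -hQ

def g (j : ℕ) : ℚ := (((3*j+1)! : ℚ) * (j ! : ℚ)) / (((2*j+1)! : ℚ) * ((2*j)! : ℚ))

lemma ratio_eq (j : ℕ) : A (j + 1) / A j = g j := by
  have h := A_succ j
  have h1 : (0:ℚ) < ((2*j+1)! : ℚ) * ((2*j)! : ℚ) := by positivity
  have h2 := A_pos j
  rw [g, div_eq_div_iff h2.ne' h1.ne']
  linarith [h]

lemma g_mono : Monotone g := by
  apply monotone_nat_of_le_succ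
  intro j
  rw [g, g, div_le_div_iff₀ (by positivity) (by positivity),
    show 3*(j+1)+1 = (3*j+3)+1 by ring, show 2*(j+1)+1 = (2*j+2)+1 by ring,
    show 2*(j+1) = (2*j+1)+1 by ring,
    Nat.factorial_succ (3*j+3), Nat.factorial_succ (3*j+2), Nat.factorial_succ (3*j+1),
    Nat.factorial_succ (2*j+2), Nat.factorial_succ (2*j+1), Nat.factorial_succ (2*j),
    Nat.factorial_succ j]
  push_cast
  have hC : (0:ℚ) ≤ ((3*j+1)! : ℚ) * (j ! : ℚ) * ((2*j)! : ℚ) * ((2*j)! : ℚ) * (2*(j:ℚ)+1) := by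
    positivity
  have key : ((2*(j:ℚ)+3) * (2*j+2) * ((2*j+2) * (2*j+1)) : ℚ)
      ≤ (3*j+4) * (3*j+3) * (3*j+2) * (j+1) := by
    have hj : (0:ℚ) ≤ (j:ℚ) := Nat.cast_nonneg j
    nlinarith [hj, sq_nonneg ((j:ℚ))]
  nlinarith [mul_le_mul_of_nonneg_left key hC, hC]

theorem stmt_1 (m n : ℕ) (hm : 1 ≤ m) (hmn : m ≤ n) :
    A m / A (m - 1) ≤ A n / A (n - 1) := by
  obtain ⟨m', rfl⟩ : ∃ m', m = m' + 1 := ⟨m - 1, by omega⟩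
  obtain ⟨n', rfl⟩ : ∃ n', n = n' + 1 := ⟨n - 1, by omega⟩
  simp only [Nat.add_sub_cancel]
  rw [ratio_eq, ratio_eq]
  exact g_mono (by omega)
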